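/- Let h be holomorphic on the open unit disk with h(0) = 1, and suppose there is C such that log|h(z)| ≤ C for all |z| < 1. Then the sum ∑ log(1/|z_k|) over the zeros z_k of h in the unit disk (counted with multiplicity) is at most C. -/

import Mathlib

open Complex Metric Filter

lemma jensen_blaschke_est (a z : ℂ) (r : ℝ) (ha : ‖a‖ < r) (hz : ‖z‖ = r)
    (hr : r < 1) :
    (r - ‖a‖) * ‖1 - (starRingEnd ℂ) a * z‖
      ≤ (1 - ‖a‖ * r) * ‖z - a‖ := by
  set A := ‖a‖ with hA
  have hA0 : 0 ≤ A := norm_nonneg a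
  have hr0 : 0 < r := lt_of_le_of_lt hA0 ha
  have h1 : 0 < 1 - A * r := by nlinarith
  have h2 : 0 < r - A := by linarith
  set t : ℝ := (a * (starRingEnd ℂ) z).re with ht
  have htle : |t| ≤ A * r := by
    calc |t| ≤ ‖a * (starRingEnd ℂ) z‖ := Complex.abs_re_le_norm _
    _ = A * r := by rw [norm_mul, Complex.norm_conj, hz]
  have htle' : t ≤ A * r := (abs_le.mp htle).2
  have hn1 : ‖1 - (starRingEnd ℂ) a * z‖ ^ 2 = 1 - 2 * t + A ^ 2 * r ^ 2 := by
    rw [Complex.sq_norm, Complex.normSq_sub]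
    have e : ((1 : ℂ) * (starRingEnd ℂ) ((starRingEnd ℂ) a * z)).re = t := by
      rw [one_mul, map_mul, Complex.conj_conj, ht]
    rw [e]
    simp [Complex.normSq_mul, Complex.normSq_conj, ← Complex.sq_norm, hz]
    ring
  have hn2 : ‖z - a‖ ^ 2 = r ^ 2 - 2 * t + A ^ 2 := by
    rw [Complex.sq_norm, Complex.normSq_sub]
    have e : (z * (starRingEnd ℂ) a).re = t := by
      rw [ht]; simp [Complex.mul_re, Complex.conj_re, Complex.conj_im]; ring
    rw [e]
    simp [← Complex.sq_norm, hz]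
    ring
  have hle : r - A ≤ 1 - A * r := by nlinarith
  have hPQ : 0 ≤ (1 - A * r) ^ 2 - (r - A) ^ 2 :=
    sub_nonneg.mpr (pow_le_pow_left₀ h2.le hle 2)
  have hsq : ((r - A) * ‖1 - (starRingEnd ℂ) a * z‖) ^ 2
      ≤ ((1 - A * r) * ‖z - a‖) ^ 2 := by
    rw [mul_pow, mul_pow, hn1, hn2]
    nlinarith [mul_nonneg (sub_nonneg.mpr htle') hPQ]
  have hL : 0 ≤ (r - A) * ‖1 - (starRingEnd ℂ) a * z‖ :=
    mul_nonneg h2.le (norm_nonneg _)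
  have hR : 0 ≤ (1 - A * r) * ‖z - a‖ :=
    mul_nonneg h1.le (norm_nonneg _)
  exact (pow_le_pow_iff_left₀ hL hR two_ne_zero).mp hsq

lemma jensen_factor_zeros (h : ℂ → ℂ) (hh : DifferentiableOn ℂ h (Metric.ball (0 : ℂ) 1))
    (s : Finset ℂ) (hs : ∀ a ∈ s, a ∈ Metric.ball (0 : ℂ) 1 ∧ h a = 0) :
    ∃ g : ℂ → ℂ, DifferentiableOn ℂ g (Metric.ball (0 : ℂ) 1) ∧
      ∀ z ∈ Metric.ball (0 : ℂ) 1, h z = g z * ∏ a ∈ s, (z - a) := by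
  induction s using Finset.induction_on with
  | empty => exact ⟨h, hh, fun z _ => by simp⟩
  | @insert a s ha ih =>
    obtain ⟨g, hg, hfac⟩ := ih (fun b hb => hs b (Finset.mem_insert_of_mem hb))
    have haball : a ∈ Metric.ball (0 : ℂ) 1 := (hs a (Finset.mem_insert_self a s)).1
    have hga : g a = 0 := by
      have h1 := hfac a haball
      rw [(hs a (Finset.mem_insert_self a s)).2] at h1
      have hne : ∏ b ∈ s, (a - b) ≠ 0 := by
        refine Finset.prod_ne_zero_iff.mpr fun b hb => sub_ne_zero.mpr ?_
        rintro rfl; exact ha hb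
      exact (mul_eq_zero.mp h1.symm).resolve_right hne
    refine ⟨dslope g a, ?_, ?_⟩
    · intro z hz
      rcases eq_or_ne z a with rfl | hne
      · obtain ⟨p, hp⟩ := (hg.analyticAt (Metric.isOpen_ball.mem_nhds haball))
        exact ((hp.has_fpower_series_dslope_fslope).analyticAt).differentiableAt.differentiableWithinAt
      · exact (differentiableWithinAt_dslope_of_ne hne).mpr (hg z hz)
    · intro z hz
      rw [Finset.prod_insert ha, hfac z hz]
      rcases eq_or_ne z a with rfl | hne
      · simp [hga]
      · rw [dslope_of_ne g hne, slope_def_field, hga]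
        field_simp [slope, sub_ne_zero.mpr hne, hga]
        ring

theorem jensen_aux (h : ℂ → ℂ) (hh : DifferentiableOn ℂ h (Metric.ball (0 : ℂ) 1))
    (h0 : h 0 = 1) (C : ℝ) (hC : ∀ z ∈ Metric.ball (0 : ℂ) 1, Real.log (‖h z‖) ≤ C)
    (s : Finset ℂ) (hs : ∀ z ∈ s, z ∈ Metric.ball (0 : ℂ) 1 ∧ h z = 0) :
      ∑ z ∈ s, Real.log (1 / ‖z‖) ≤ C := by
  have hball0 : (0:ℂ) ∈ Metric.ball (0:ℂ) 1 := by simp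
  have hC0 : 0 ≤ C := by simpa [h0] using hC 0 hball0
  rcases s.eq_empty_or_nonempty with rfl | hne
  · simpa using hC0
  have habs : ∀ a ∈ s, 0 < ‖a‖ ∧ ‖a‖ < 1 := by
    intro a has
    obtain ⟨hball, hz⟩ := hs a has
    have hne0 : a ≠ 0 := by rintro rfl; rw [h0] at hz; exact one_ne_zero hz
    exact ⟨norm_pos_iff.mpr hne0, by simpa [Complex.dist_eq] using hball⟩
  obtain ⟨g, hg, hfac⟩ := jensen_factor_zeros h hh s hs
  set G : ℂ → ℂ := fun z => g z * ∏ a ∈ s, (1 - (starRingEnd ℂ) a * z) with hGdef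
  have hGd : DifferentiableOn ℂ G (Metric.ball (0:ℂ) 1) := by
    apply hg.mul
    apply Differentiable.differentiableOn
    apply Differentiable.fun_finsetProd
    intro a _
    fun_prop
  -- value at 0
  have hg0 : ‖g 0‖ * ∏ a ∈ s, ‖a‖ = 1 := by
    have h1 := hfac 0 hball0
    rw [h0] at h1
    have : ‖(1:ℂ)‖ = ‖g 0 * ∏ a ∈ s, ((0:ℂ) - a)‖ := by rw [← h1]
    simpa [norm_mul, norm_prod] using this.symm
  have hG0 : ‖G 0‖ = ∏ a ∈ s, (‖a‖)⁻¹ := by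
    have hprodpos : 0 < ∏ a ∈ s, ‖a‖ :=
      Finset.prod_pos fun a ha => (habs a ha).1
    have h1 : ‖G 0‖ = ‖g 0‖ := by simp [hGdef]
    rw [h1, Finset.prod_inv_distrib]
    field_simp [ne_of_gt hprodpos]
    linarith [hg0]

  -- sup of |a|
  set M : ℝ := s.sup' hne (fun a => ‖a‖) with hMdef
  have hM1 : M < 1 := (Finset.sup'_lt_iff hne).mpr fun a ha => (habs a ha).2
  have hM0 : 0 < M := by
    obtain ⟨a, ha⟩ := hne
    exact lt_of_lt_of_le (habs a ha).1 (Finset.le_sup' _ ha)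
  -- key inequality for M < r < 1
  have key : ∀ r ∈ Set.Ioo M 1, ∑ z ∈ s, Real.log (1 / ‖z‖)
      ≤ C + ∑ a ∈ s, Real.log ((1 - ‖a‖ * r) / (r - ‖a‖)) := by
    rintro r ⟨hMr, hr1⟩
    have hr0 : 0 < r := hM0.trans hMr
    have har : ∀ a ∈ s, ‖a‖ < r := fun a ha =>
      lt_of_le_of_lt (Finset.le_sup' _ ha) hMr
    have hQpos : ∀ a ∈ s, 0 < (1 - ‖a‖ * r) / (r - ‖a‖) := by
      intro a ha
      have h1 : 0 < 1 - ‖a‖ * r := by nlinarith [(habs a ha).2, norm_nonneg a]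
      exact div_pos h1 (by linarith [har a ha])
    set B : ℝ := Real.exp C * ∏ a ∈ s, ((1 - ‖a‖ * r) / (r - ‖a‖)) with hBdef
    -- max modulus
    have hmax : ‖G 0‖ ≤ B := by
      have hcls : closure (Metric.ball (0:ℂ) r) ⊆ Metric.ball (0:ℂ) 1 := by
        rw [closure_ball (0:ℂ) (ne_of_gt hr0)]
        exact Metric.closedBall_subset_ball hr1
      have hdc : DiffContOnCl ℂ G (Metric.ball (0:ℂ) r) :=
        DifferentiableOn.diffContOnCl (hGd.mono hcls)
      have hfr : ∀ z ∈ frontier (Metric.ball (0:ℂ) r), ‖G z‖ ≤ B := by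
        intro z hzf
        rw [frontier_ball (0:ℂ) (ne_of_gt hr0)] at hzf
        have hzr : ‖z‖ = r := by
          simpa [Complex.dist_eq] using hzf
        have hzball : z ∈ Metric.ball (0:ℂ) 1 := by
          simp [Complex.dist_eq, hzr, hr1, mem_ball]
        have hzne : ∀ a ∈ s, z - a ≠ 0 := by
          intro a ha hcontra
          have : z = a := by linear_combination hcontra
          rw [this] at hzr
          exact absurd hzr (ne_of_lt (har a ha))
        have hPpos : 0 < ∏ a ∈ s, ‖z - a‖ :=
          Finset.prod_pos fun a ha => norm_pos_iff.mpr (hzne a ha)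
        have heq : ‖G z‖ * ∏ a ∈ s, ‖z - a‖
            = ‖h z‖ * ∏ a ∈ s, ‖1 - (starRingEnd ℂ) a * z‖ := by
          rw [hfac z hzball]
          simp only [hGdef, norm_mul, norm_prod]
          ring
        have habsh : ‖h z‖ ≤ Real.exp C := by
          rcases eq_or_ne (h z) 0 with hz0 | hz0
          · rw [hz0]; simpa using (Real.exp_pos C).le
          · calc ‖h z‖ = Real.exp (Real.log (‖h z‖)) :=
                  (Real.exp_log (norm_pos_iff.mpr hz0)).symm
              _ ≤ Real.exp C := Real.exp_le_exp.mpr (hC z hzball)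
        have hterm : ∀ a ∈ s, ‖1 - (starRingEnd ℂ) a * z‖
            ≤ (1 - ‖a‖ * r) / (r - ‖a‖) * ‖z - a‖ := by
          intro a ha
          have hb := jensen_blaschke_est a z r (har a ha) hzr hr1
          have hpos : 0 < r - ‖a‖ := by linarith [har a ha]
          rw [div_mul_eq_mul_div, le_div_iff₀ hpos]
          linarith [hb]
        have hstep : ‖h z‖ * ∏ a ∈ s, ‖1 - (starRingEnd ℂ) a * z‖
            ≤ B * ∏ a ∈ s, ‖z - a‖ := by
          have h1 : ∏ a ∈ s, ‖1 - (starRingEnd ℂ) a * z‖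
              ≤ ∏ a ∈ s, ((1 - ‖a‖ * r) / (r - ‖a‖) * ‖z - a‖) :=
            Finset.prod_le_prod (fun a _ => norm_nonneg _) hterm
          have h2 : ∏ a ∈ s, ((1 - ‖a‖ * r) / (r - ‖a‖) * ‖z - a‖)
              = (∏ a ∈ s, ((1 - ‖a‖ * r) / (r - ‖a‖))) * ∏ a ∈ s, ‖z - a‖ :=
            Finset.prod_mul_distrib
          calc ‖h z‖ * ∏ a ∈ s, ‖1 - (starRingEnd ℂ) a * z‖
              ≤ Real.exp C * ∏ a ∈ s, ((1 - ‖a‖ * r) / (r - ‖a‖) * ‖z - a‖) := by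
                apply mul_le_mul habsh h1 (Finset.prod_nonneg fun a _ => norm_nonneg _) (Real.exp_pos C).le
            _ = B * ∏ a ∈ s, ‖z - a‖ := by rw [h2, hBdef]; ring
        have : ‖G z‖ * ∏ a ∈ s, ‖z - a‖
            ≤ B * ∏ a ∈ s, ‖z - a‖ := heq ▸ hstep
        have hfin := le_of_mul_le_mul_right this hPpos
        simpa using hfin
      have h0cl : (0:ℂ) ∈ closure (Metric.ball (0:ℂ) r) :=
        subset_closure (Metric.mem_ball_self hr0)
      have := Complex.norm_le_of_forall_mem_frontier_norm_le Metric.isBounded_ball hdc hfr h0cl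
      simpa using this
    -- take logs
    have hprodinvpos : 0 < ∏ a ∈ s, (‖a‖)⁻¹ :=
      Finset.prod_pos fun a ha => inv_pos.mpr (habs a ha).1
    have hlog : Real.log (‖G 0‖) ≤ Real.log B :=
      Real.log_le_log (by rw [hG0]; exact hprodinvpos) hmax
    rw [hG0, Real.log_prod (fun a ha => ne_of_gt (inv_pos.mpr (habs a ha).1))] at hlog
    have hlogB : Real.log B = C + ∑ a ∈ s, Real.log ((1 - ‖a‖ * r) / (r - ‖a‖)) := by
      rw [hBdef, Real.log_mul (Real.exp_ne_zero C)
        (ne_of_gt (Finset.prod_pos hQpos)), Real.log_exp,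
        Real.log_prod (fun a ha => ne_of_gt (hQpos a ha))]
    rw [hlogB] at hlog
    calc ∑ z ∈ s, Real.log (1 / ‖z‖) = ∑ a ∈ s, Real.log (‖a‖)⁻¹ := by
          simp [one_div]
      _ ≤ _ := hlog
  -- limit as r → 1⁻
  have htend : Tendsto (fun r : ℝ => C + ∑ a ∈ s, Real.log ((1 - ‖a‖ * r) / (r - ‖a‖)))
      (nhdsWithin 1 (Set.Iio 1)) (nhds C) := by
    have hsum : Tendsto (fun r : ℝ => ∑ a ∈ s, Real.log ((1 - ‖a‖ * r) / (r - ‖a‖)))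
        (nhds (1:ℝ)) (nhds 0) := by
      have : (0:ℝ) = ∑ a ∈ s, (0:ℝ) := by simp
      rw [this]
      apply tendsto_finset_sum
      intro a ha
      have hA1 : ‖a‖ < 1 := (habs a ha).2
      have hden : (1:ℝ) - ‖a‖ ≠ 0 := by linarith
      have hcont : ContinuousAt (fun r : ℝ => (1 - ‖a‖ * r) / (r - ‖a‖)) 1 := by
        apply ContinuousAt.div
        · fun_prop
        · fun_prop
        · simpa using hden
      have hval : (1 - ‖a‖ * 1) / ((1:ℝ) - ‖a‖) = 1 := by
        rw [mul_one]; exact div_self hden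
      have ht : Tendsto (fun r : ℝ => (1 - ‖a‖ * r) / (r - ‖a‖))
          (nhds 1) (nhds 1) := by
        have := hcont.tendsto
        simp only [mul_one] at this
        rwa [div_self hden] at this
      have h2 := ((Real.continuousAt_log one_ne_zero).tendsto).comp ht
      simpa [Function.comp_def, Real.log_one] using h2
    have := (tendsto_const_nhds (x := C)).add hsum
    rw [add_zero] at this
    exact this.mono_left nhdsWithin_le_nhds
  have hev : ∀ᶠ r in nhdsWithin (1:ℝ) (Set.Iio 1),
      ∑ z ∈ s, Real.log (1 / ‖z‖)
        ≤ C + ∑ a ∈ s, Real.log ((1 - ‖a‖ * r) / (r - ‖a‖)) := by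
    filter_upwards [Ioo_mem_nhdsLT_of_mem (Set.mem_Ioc.mpr ⟨hM1, le_refl 1⟩)] with r hr
    exact key r hr
  exact ge_of_tendsto htend hev

/-- Jensen bound: if h is holomorphic on the unit disk, h(0)=1 and log|h| ≤ C on the
disk, then any finite collection of distinct zeros z_k of h in the disk satisfies
∑ log(1/|z_k|) ≤ C. -/
theorem stmt7 (h : ℂ → ℂ) (hh : DifferentiableOn ℂ h (Metric.ball (0 : ℂ) 1))
    (h0 : h 0 = 1) (C : ℝ) (hC : ∀ z ∈ Metric.ball (0 : ℂ) 1, Real.log (‖h z‖) ≤ C) :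
    ∀ s : Finset ℂ, (∀ z ∈ s, z ∈ Metric.ball (0 : ℂ) 1 ∧ h z = 0) →
      ∑ z ∈ s, Real.log (1 / ‖z‖) ≤ C := by
  intro s hs
  exact jensen_aux h hh h0 C hC s hs
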